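/- In any edge-coloring (with any number of colors) of a finite complete graph on at least 2 vertices that contains no rainbow triangle, there exists a partition of the vertex set into at least two nonempty parts such that: (a) for each pair of distinct parts, all edges between the two parts have the same color, and (b) at most two colors in total appear on edges between different parts. -/

import Mathlib

open Finset

/-- A symmetric edge-coloring of a complete graph (given as a function on ordered pairs). -/
def IsSymm2 {V C : Type*} (c : V → V → C) : Prop := ∀ a b : V, c a b = c b a

/-- The coloring contains a rainbow triangle: three vertices whose three pairwise
edges receive three distinct colors. -/
def HasRainbowTriangle {V C : Type*} (c : V → V → C) : Prop :=
  ∃ a b d : V, a ≠ b ∧ a ≠ d ∧ b ≠ d ∧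
    c a b ≠ c a d ∧ c a b ≠ c b d ∧ c a d ≠ c b d

/-- The coloring contains a monochromatic star `K_{1,n}`: a center `v` with `n`
incident edges of a single color. -/
def HasMonoStar {V C : Type*} (c : V → V → C) (n : ℕ) : Prop :=
  ∃ (i : C) (v : V) (S : Finset V), S.card = n ∧ v ∉ S ∧ ∀ x ∈ S, c v x = i

/-- The coloring contains a monochromatic copy of `K_{1,n} ∪ K_{1,m}`: two
vertex-disjoint stars of the same color with `n` and `m` leaves respectively. -/
def HasMonoTwoStars {V C : Type*} (c : V → V → C) (n m : ℕ) : Prop :=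
  ∃ (i : C) (u v : V) (S T : Finset V), u ≠ v ∧ S.card = n ∧ T.card = m ∧
    Disjoint S T ∧ u ∉ S ∧ u ∉ T ∧ v ∉ S ∧ v ∉ T ∧
    (∀ x ∈ S, c u x = i) ∧ (∀ y ∈ T, c v y = i)


set_option linter.unusedSectionVars false
set_option maxHeartbeats 1000000

section GallaiHelpers
variable {V C : Type*} [DecidableEq V]

def GStep (c : V → V → C) (S : Finset V) (i j : C) (x y : V) : Prop :=
  x ∈ S ∧ y ∈ S ∧ x ≠ y ∧ c x y ≠ i ∧ c x y ≠ j

def GRel (c : V → V → C) (S : Finset V) (i j : C) : V → V → Prop :=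
  Relation.ReflTransGen (GStep c S i j)

variable {c : V → V → C} {S : Finset V} {i j : C}

lemma grel_refl (a : V) : GRel c S i j a a := Relation.ReflTransGen.refl

lemma grel_symm (hsymm : IsSymm2 c) {a b : V} (h : GRel c S i j a b) : GRel c S i j b a := by
  refine (show Std.Symm (GStep c S i j) → _ from fun _ => Relation.ReflTransGen.symmetric.symm _ _ h) ⟨?_⟩
  rintro x y ⟨h1, h2, h3, h4, h5⟩
  exact ⟨h2, h1, h3.symm, by rw [← hsymm x y]; exact h4, by rw [← hsymm x y]; exact h5⟩

lemma grel_trans {a b d : V} (h1 : GRel c S i j a b) (h2 : GRel c S i j b d) :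
    GRel c S i j a d := h1.trans h2

lemma grel_color {a b : V} (ha : a ∈ S) (hb : b ∈ S) (h : ¬ GRel c S i j a b) :
    c a b = i ∨ c a b = j := by
  by_contra hcon
  push_neg at hcon
  have hab : a ≠ b := by rintro rfl; exact h (grel_refl a)
  exact h (Relation.ReflTransGen.single ⟨ha, hb, hab, hcon.1, hcon.2⟩)

lemma grel_ne {a b : V} (h : ¬ GRel c S i j a b) : a ≠ b := by
  rintro rfl; exact h (grel_refl a)

lemma grel_mono (hrb : ¬ HasRainbowTriangle c) {a a' b : V} (h : GRel c S i j a a')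
    (hb : b ∈ S) (hnb : ¬ GRel c S i j a b) : c a b = c a' b := by
  induction h with
  | refl => rfl
  | tail hax hstep ih =>
    rename_i x y
    have hnxb : ¬ GRel c S i j x b := fun hh => hnb (hax.trans hh)
    have hnyb : ¬ GRel c S i j y b := fun hh => hnb ((hax.tail hstep).trans hh)
    obtain ⟨hxS, hyS, hxy, hcxyi, hcxyj⟩ := hstep
    have h1 : c x b = i ∨ c x b = j := grel_color hxS hb hnxb
    have h2 : c y b = i ∨ c y b = j := grel_color hyS hb hnyb
    have hkey : c x b = c y b := by
      by_contra hne
      refine hrb ⟨x, y, b, hxy, grel_ne hnxb, grel_ne hnyb, ?_, ?_, hne⟩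
      · rcases h1 with e | e <;> rw [e] <;> assumption
      · rcases h2 with e | e <;> rw [e] <;> assumption
    rw [ih, hkey]

lemma grel_stays {A : Finset V}
    (hcut : ∀ a ∈ A, ∀ b ∈ S, b ∉ A → c a b = i ∨ c a b = j)
    {a x : V} (h : GRel c S i j a x) (ha : a ∈ A) : x ∈ A := by
  induction h with
  | refl => exact ha
  | tail hax hstep ih =>
    rename_i x y
    obtain ⟨hxS, hyS, hxy, h4, h5⟩ := hstep
    by_contra hy
    rcases hcut x ih y hyS hy with e | e
    · exact h4 e
    · exact h5 e

lemma gallai_cut (hsymm : IsSymm2 c) (hrb : ¬ HasRainbowTriangle c) :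
    ∀ S : Finset V, 2 ≤ S.card →
    ∃ (i j : C) (A : Finset V), A ⊆ S ∧ A.Nonempty ∧ (S \ A).Nonempty ∧
      ∀ a ∈ A, ∀ b ∈ S \ A, c a b = i ∨ c a b = j := by
  classical
  intro S
  induction S using Finset.strongInduction with
  | _ S ihS =>
  intro hS2
  by_cases h3 : 3 ≤ S.card
  case neg =>
    -- base case : |S| = 2
    have hcard : S.card = 2 := le_antisymm (by omega) hS2
    obtain ⟨a, b, hab, rfl⟩ := Finset.card_eq_two.mp hcard
    refine ⟨c a b, c a b, {a}, ?_, ⟨a, mem_singleton_self a⟩, ⟨b, ?_⟩, ?_⟩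
    · simp
    · simp [hab.symm]
    · intro x hx y hy
      rw [mem_singleton] at hx
      subst hx
      rw [mem_sdiff, mem_insert, mem_singleton, mem_singleton] at hy
      have hy' : y = b := by tauto
      subst hy'
      exact Or.inl rfl
  case pos =>
  -- inductive step
  obtain ⟨v, hv⟩ : S.Nonempty := Finset.card_pos.mp (by omega)
  set S' := S.erase v with hS'def
  have hS'sub : S' ⊂ S := Finset.erase_ssubset hv
  have hS'card : S'.card = S.card - 1 := Finset.card_erase_of_mem hv
  have hvS' : v ∉ S' := Finset.notMem_erase v S
  have hS'S : S' ⊆ S := Finset.erase_subset v S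
  have hmemS' : ∀ x ∈ S, x ≠ v → x ∈ S' := fun x hx hxv => Finset.mem_erase.mpr ⟨hxv, hx⟩
  obtain ⟨i, j, A', hA'sub, hA'ne, hB'ne, hcut'⟩ := ihS S' hS'sub (by omega)
  obtain ⟨a₀, ha₀⟩ := hA'ne
  obtain ⟨b₀, hb₀⟩ := hB'ne
  have ha₀S' : a₀ ∈ S' := hA'sub ha₀
  have hb₀S' : b₀ ∈ S' := (mem_sdiff.mp hb₀).1
  have hb₀A' : b₀ ∉ A' := (mem_sdiff.mp hb₀).2
  have hcut'' : ∀ a ∈ A', ∀ b ∈ S', b ∉ A' → c a b = i ∨ c a b = j := by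
    intro a ha b hb hb2
    exact hcut' a ha b (mem_sdiff.mpr ⟨hb, hb2⟩)
  have hstay : ∀ ⦃a x : V⦄, a ∈ A' → GRel c S' i j a x → x ∈ A' :=
    fun a x ha h => grel_stays hcut'' h ha
  have hnab : ¬ GRel c S' i j a₀ b₀ := fun h => hb₀A' (hstay ha₀ h)
  have hvne : ∀ x ∈ S', v ≠ x := fun x hx e => hvS' (e ▸ hx)
  set N : Finset V := S'.filter (fun x => c v x ≠ i ∧ c v x ≠ j) with hNdef
  have hmemN : ∀ x, x ∈ N ↔ x ∈ S' ∧ c v x ≠ i ∧ c v x ≠ j := by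
    intro x; rw [hNdef, mem_filter]
  have hnotN : ∀ x ∈ S', x ∉ N → c v x = i ∨ c v x = j := by
    intro x hx hxn
    by_contra hcon
    push_neg at hcon
    exact hxn ((hmemN x).mpr ⟨hx, hcon⟩)
  by_cases hN1 : ∀ x ∈ N, ∀ y ∈ N, GRel c S' i j x y
  · -- Case 1 : N lies within one component
    by_cases hNem : N.Nonempty
    · obtain ⟨n₀, hn₀⟩ := hNem
      have hn₀S' : n₀ ∈ S' := ((hmemN n₀).mp hn₀).1
      obtain ⟨w, hwS', hwnr⟩ : ∃ w ∈ S', ¬ GRel c S' i j n₀ w := by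
        by_cases hna : GRel c S' i j n₀ a₀
        · exact ⟨b₀, hb₀S', fun h => hnab ((grel_symm hsymm hna).trans h)⟩
        · exact ⟨a₀, ha₀S', hna⟩
      refine ⟨i, j, insert v (S'.filter (fun x => GRel c S' i j n₀ x)), ?_,
        ⟨v, mem_insert_self _ _⟩, ⟨w, ?_⟩, ?_⟩
      · intro x hx
        rcases mem_insert.mp hx with rfl | hx
        · exact hv
        · exact hS'S (mem_filter.mp hx).1
      · rw [mem_sdiff, mem_insert]
        push_neg
        exact ⟨hS'S hwS', (hvne w hwS').symm, fun hc => hwnr (mem_filter.mp hc).2⟩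
      · intro a ha b hb
        rw [mem_sdiff, mem_insert] at hb
        push_neg at hb
        obtain ⟨hbS, hbv, hbF⟩ := hb
        have hbS' : b ∈ S' := hmemS' b hbS hbv
        have hbnr : ¬ GRel c S' i j n₀ b := fun h => hbF (mem_filter.mpr ⟨hbS', h⟩)
        rcases mem_insert.mp ha with rfl | ha
        · -- a = v
          refine hnotN b hbS' (fun hbN => hbnr (hN1 n₀ hn₀ b hbN))
        · obtain ⟨haS', hna⟩ := mem_filter.mp ha
          exact grel_color haS' hbS' (fun h => hbnr (hna.trans h))
    · -- N empty : all edges at v are colored i or j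
      refine ⟨i, j, {v}, singleton_subset_iff.mpr hv, singleton_nonempty v, ⟨a₀, ?_⟩, ?_⟩
      · rw [mem_sdiff, mem_singleton]
        exact ⟨hS'S ha₀S', (hvne a₀ ha₀S').symm⟩
      · intro a ha b hb
        rw [mem_singleton] at ha
        subst ha
        rw [mem_sdiff, mem_singleton] at hb
        have hbS' : b ∈ S' := hmemS' b hb.1 hb.2
        exact hnotN b hbS' (fun hc => hNem ⟨b, hc⟩)
  · -- Case 2 : N meets at least two components
    push_neg at hN1
    obtain ⟨xb, hxbN, yb, hybN, hxyb⟩ := hN1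
    obtain ⟨hxbS', hxbi, hxbj⟩ := (hmemN xb).mp hxbN
    obtain ⟨hybS', hybi, hybj⟩ := (hmemN yb).mp hybN
    set k := c v xb with hkdef
    -- all v-N edges get color k
    have hdiffN : ∀ z ∈ N, ∀ w ∈ N, ¬ GRel c S' i j z w → c v z = c v w := by
      intro z hz w hw hnr
      obtain ⟨hzS', hzi, hzj⟩ := (hmemN z).mp hz
      obtain ⟨hwS', hwi, hwj⟩ := (hmemN w).mp hw
      have hzw : z ≠ w := grel_ne hnr
      have hcol : c z w = i ∨ c z w = j := grel_color hzS' hwS' hnr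
      by_contra hne
      refine hrb ⟨v, z, w, hvne z hzS', hvne w hwS', hzw, hne, ?_, ?_⟩
      · rcases hcol with e | e <;> rw [e] <;> assumption
      · rcases hcol with e | e <;> rw [e] <;> assumption
    have hkN : ∀ z ∈ N, c v z = k := by
      intro z hz
      by_cases hr : GRel c S' i j z xb
      · have hnzy : ¬ GRel c S' i j z yb := fun h => hxyb ((grel_symm hsymm hr).trans h)
        rw [hdiffN z hz yb hybN hnzy]
        exact (hdiffN xb hxbN yb hybN hxyb).symm
      · exact hdiffN z hz xb hxbN hr
    have hki : k ≠ i := hxbi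
    have hkj : k ≠ j := hxbj
    -- star lemma
    have hstar : ∀ w ∈ S', w ∉ N → ∀ z ∈ N, ¬ GRel c S' i j w z → c v w = c w z := by
      intro w hwS' hwN z hz hnr
      obtain ⟨hzS', hzi, hzj⟩ := (hmemN z).mp hz
      have hcvw : c v w = i ∨ c v w = j := hnotN w hwS' hwN
      have hcwz : c w z = i ∨ c w z = j := grel_color hwS' hzS' hnr
      have hvzk : c v z = k := hkN z hz
      by_contra hne
      refine hrb ⟨v, w, z, hvne w hwS', hvne z hzS', grel_ne hnr, ?_, hne, ?_⟩
      · rw [hvzk]; rcases hcvw with e | e <;> rw [e]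
        · exact fun h => hki h.symm
        · exact fun h => hkj h.symm
      · rw [hvzk]; rcases hcwz with e | e <;> rw [e]
        · exact hki
        · exact hkj
    by_cases h2a : ∃ b₁ ∈ S', ∀ z ∈ N, ¬ GRel c S' i j b₁ z
    · -- some component avoids N
      obtain ⟨b₁, hb₁S', hb₁⟩ := h2a
      refine ⟨i, j, insert v (S'.filter (fun x => ∃ z ∈ N, GRel c S' i j z x)), ?_,
        ⟨v, mem_insert_self _ _⟩, ⟨b₁, ?_⟩, ?_⟩
      · intro x hx
        rcases mem_insert.mp hx with rfl | hx
        · exact hv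
        · exact hS'S (mem_filter.mp hx).1
      · rw [mem_sdiff, mem_insert]
        push_neg
        refine ⟨hS'S hb₁S', (hvne b₁ hb₁S').symm, fun hc => ?_⟩
        obtain ⟨z, hz, hrz⟩ := (mem_filter.mp hc).2
        exact hb₁ z hz (grel_symm hsymm hrz)
      · intro a ha b hb
        rw [mem_sdiff, mem_insert] at hb
        push_neg at hb
        obtain ⟨hbS, hbv, hbF⟩ := hb
        have hbS' : b ∈ S' := hmemS' b hbS hbv
        have hbnr : ∀ z ∈ N, ¬ GRel c S' i j z b :=
          fun z hz h => hbF (mem_filter.mpr ⟨hbS', z, hz, h⟩)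
        rcases mem_insert.mp ha with rfl | ha
        · exact hnotN b hbS' (fun hbN => hbnr b hbN (grel_refl b))
        · obtain ⟨haS', z, hzN, hza⟩ := mem_filter.mp ha
          exact grel_color haS' hbS' (fun h => hbnr z hzN (hza.trans h))
    · -- every component meets N
      push_neg at h2a
      have h2b : ∀ b ∈ S', ∃ z ∈ N, GRel c S' i j b z := by
        intro b hb
        obtain ⟨z, hz, hrz⟩ := h2a b hb
        exact ⟨z, hz, hrz⟩
      by_cases hx0 : ∃ x₀ ∈ S', x₀ ∉ N
      · obtain ⟨x₀, hx₀S', hx₀N⟩ := hx0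
        -- every x outside N has some N-element in another component
        have hzx : ∀ x ∈ S', ∃ z ∈ N, ¬ GRel c S' i j x z := by
          intro x hx
          by_cases hr : GRel c S' i j x xb
          · exact ⟨yb, hybN, fun h => hxyb ((grel_symm hsymm hr).trans h)⟩
          · exact ⟨xb, hxbN, hr⟩
        -- all v-edges outside N share one color d
        have hval : ∀ x ∈ S', x ∉ N → ∀ x' ∈ S', x' ∉ N → c v x = c v x' := by
          intro x hx hxN x' hx' hx'N
          by_cases hrxx' : GRel c S' i j x x'
          · obtain ⟨z, hzN, hnz⟩ := hzx x hx
            have hzS' : z ∈ S' := ((hmemN z).mp hzN).1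
            have hnz' : ¬ GRel c S' i j x' z :=
              fun h => hnz (hrxx'.trans h)
            rw [hstar x hx hxN z hzN hnz, hstar x' hx' hx'N z hzN hnz']
            exact grel_mono hrb hrxx' hzS' hnz
          · obtain ⟨z, hzN, hrz⟩ := h2b x' hx'
            have hzS' : z ∈ S' := ((hmemN z).mp hzN).1
            have hnxz : ¬ GRel c S' i j x z := fun h => hrxx' (h.trans (grel_symm hsymm hrz))
            obtain ⟨z', hz'N, hrz'⟩ := h2b x hx
            have hz'S' : z' ∈ S' := ((hmemN z').mp hz'N).1
            have hnx'z' : ¬ GRel c S' i j x' z' :=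
              fun h => hrxx' (hrz'.trans (grel_symm hsymm h))
            have e1 : c v x = c x z := hstar x hx hxN z hzN hnxz
            have e2 : c v x' = c x' z' := hstar x' hx' hx'N z' hz'N hnx'z'
            -- c x z = c x' x  (mono along x' ~ z, base x)
            have hnx'x : ¬ GRel c S' i j x' x := fun h => hrxx' (grel_symm hsymm h)
            have e3 : c x' x = c z x := grel_mono hrb hrz hx hnx'x
            -- c x x' = c z' x'  (mono along x ~ z', base x')
            have e4 : c x x' = c z' x' := grel_mono hrb hrz' hx' hrxx'
            rw [e1, e2, hsymm x z, ← e3, hsymm x' z', ← e4, hsymm x x']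
        have hx₀k : c v x₀ = i ∨ c v x₀ = j := hnotN x₀ hx₀S' hx₀N
        set d := c v x₀ with hddef
        have hdk : d ≠ k := by
          rcases hx₀k with e | e <;> rw [e]
          · exact fun h => hki h.symm
          · exact fun h => hkj h.symm
        have hvB : ∀ b ∈ S', b ∉ N → c v b = d :=
          fun b hb hbN => hval b hb hbN x₀ hx₀S' hx₀N
        refine ⟨d, k, insert v N, ?_, ⟨v, mem_insert_self _ _⟩, ⟨x₀, ?_⟩, ?_⟩
        · intro x hx
          rcases mem_insert.mp hx with rfl | hx
          · exact hv
          · exact hS'S ((hmemN x).mp hx).1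
        · rw [mem_sdiff, mem_insert]
          push_neg
          exact ⟨hS'S hx₀S', (hvne x₀ hx₀S').symm, hx₀N⟩
        · intro a ha b hb
          rw [mem_sdiff, mem_insert] at hb
          push_neg at hb
          obtain ⟨hbS, hbv, hbN⟩ := hb
          have hbS' : b ∈ S' := hmemS' b hbS hbv
          rcases mem_insert.mp ha with rfl | haN
          · exact Or.inl (hvB b hbS' hbN)
          · have haS' : a ∈ S' := ((hmemN a).mp haN).1
            by_cases hrba : GRel c S' i j b a
            · by_contra hcon
              push_neg at hcon
              have h1 : c v b = d := hvB b hbS' hbN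
              have h2 : c v a = k := hkN a haN
              have hab : a ≠ b := fun e => hbN (e ▸ haN)
              refine hrb ⟨v, b, a, hvne b hbS', hvne a haS', hab.symm, ?_, ?_, ?_⟩
              · rw [h1, h2]; exact hdk
              · rw [h1, hsymm b a]; exact fun e => hcon.1 e.symm
              · rw [h2, hsymm b a]; exact fun e => hcon.2 e.symm
            · have hst := hstar b hbS' hbN a haN hrba
              exact Or.inl (by rw [hsymm a b, ← hst, hvB b hbS' hbN])
      · -- S' = N : all edges at v get color k
        push_neg at hx0
        refine ⟨k, k, {v}, singleton_subset_iff.mpr hv, singleton_nonempty v, ⟨a₀, ?_⟩, ?_⟩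
        · rw [mem_sdiff, mem_singleton]
          exact ⟨hS'S ha₀S', (hvne a₀ ha₀S').symm⟩
        · intro a ha b hb
          rw [mem_singleton] at ha
          subst ha
          rw [mem_sdiff, mem_singleton] at hb
          have hbS' : b ∈ S' := hmemS' b hb.1 hb.2
          exact Or.inl (hkN b (hx0 b hbS'))

end GallaiHelpers

/-- Gallai's theorem: any rainbow-triangle-free edge-coloring of a complete graph
on at least 2 vertices admits a nontrivial partition where edges between any two
parts are monochromatic and at most two colors appear between parts. -/
theorem gallai_partition {V C : Type*} [Fintype V] [DecidableEq V]
    (hV : 2 ≤ Fintype.card V) (c : V → V → C) (hsymm : IsSymm2 c)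
    (hrb : ¬ HasRainbowTriangle c) :
    ∃ P : Finpartition (Finset.univ : Finset V),
      2 ≤ P.parts.card ∧
      (∀ p ∈ P.parts, ∀ q ∈ P.parts, p ≠ q → ∃ i : C, ∀ a ∈ p, ∀ b ∈ q, c a b = i) ∧
      ∃ i j : C, ∀ p ∈ P.parts, ∀ q ∈ P.parts, p ≠ q →
        ∀ a ∈ p, ∀ b ∈ q, c a b = i ∨ c a b = j := by

  classical
  have huniv : 2 ≤ (Finset.univ : Finset V).card := by simpa using hV
  obtain ⟨i, j, A, hAsub, hAne, hBne, hcut⟩ := gallai_cut hsymm hrb univ huniv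
  set r := GRel c (univ : Finset V) i j with hrdef
  let s : Setoid V := ⟨r, ⟨fun a => grel_refl a, fun h => grel_symm hsymm h,
    fun h1 h2 => grel_trans h1 h2⟩⟩
  let P := Finpartition.ofSetoid s
  have hmp : ∀ a b : V, b ∈ P.part a ↔ r a b := fun a b =>
    Finpartition.mem_part_ofSetoid_iff_rel
  have hrel_of_mem : ∀ p ∈ P.parts, ∀ a ∈ p, ∀ b ∈ p, r a b := by
    intro p hp a ha b hb
    have he : P.part a = p := P.part_eq_of_mem hp ha
    exact (hmp a b).mp (he ▸ hb)
  have hnotrel : ∀ p ∈ P.parts, ∀ q ∈ P.parts, p ≠ q → ∀ a ∈ p, ∀ b ∈ q, ¬ r a b := by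
    intro p hp q hq hpq a ha b hb hr
    have h1 : P.part a = p := P.part_eq_of_mem hp ha
    have h2 : b ∈ P.part a := (hmp a b).mpr hr
    exact hpq (P.eq_of_mem_parts hp hq (by rwa [h1] at h2) hb)
  refine ⟨P, ?_, ?_, i, j, ?_⟩
  · -- at least two parts
    obtain ⟨a₀, ha₀⟩ := hAne
    obtain ⟨b₀, hb₀⟩ := hBne
    have hb₀A : b₀ ∉ A := (mem_sdiff.mp hb₀).2
    have hcut2 : ∀ a ∈ A, ∀ b ∈ (univ : Finset V), b ∉ A → c a b = i ∨ c a b = j :=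
      fun a ha b hb hb2 => hcut a ha b (mem_sdiff.mpr ⟨hb, hb2⟩)
    have hnr : ¬ r a₀ b₀ := fun h => hb₀A (grel_stays hcut2 h ha₀)
    have hne' : P.part a₀ ≠ P.part b₀ := by
      intro e
      exact hnr ((hmp a₀ b₀).mp (e ▸ P.mem_part (mem_univ b₀)))
    exact Finset.one_lt_card.mpr ⟨P.part a₀, P.part_mem.mpr (mem_univ a₀),
      P.part b₀, P.part_mem.mpr (mem_univ b₀), hne'⟩
  · -- mono between parts
    intro p hp q hq hpq
    obtain ⟨a₁, ha₁⟩ := P.nonempty_of_mem_parts hp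
    obtain ⟨b₁, hb₁⟩ := P.nonempty_of_mem_parts hq
    refine ⟨c a₁ b₁, fun a ha b hb => ?_⟩
    have h1 : c a b = c a₁ b :=
      grel_mono hrb (hrel_of_mem p hp a ha a₁ ha₁) (mem_univ b)
        (hnotrel p hp q hq hpq a ha b hb)
    have h2 : c b a₁ = c b₁ a₁ :=
      grel_mono hrb (hrel_of_mem q hq b hb b₁ hb₁) (mem_univ a₁)
        (hnotrel q hq p hp (Ne.symm hpq) b hb a₁ ha₁)
    rw [h1, hsymm a₁ b, h2, hsymm b₁ a₁]
  · -- two colors between parts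
    intro p hp q hq hpq a ha b hb
    exact grel_color (mem_univ a) (mem_univ b) (hnotrel p hp q hq hpq a ha b hb)
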